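/- Let (a₀,…,a_{N-1}) and (b₀,…,b_{N-1}) be two non-decreasing finite sequences of positive reals. Then for any permutation σ of {0,…,N-1}, ∏ⱼ (aⱼ + bⱼ) ≤ ∏ⱼ (aⱼ + b_{σ(j)}) ≤ ∏ⱼ (aⱼ + b_{N-1-j}). -/

import Mathlib

open Finset

/-- Key rearrangement lemma: if `g` is positive and "submodular" in the sense below,
then the diagonal pairing minimizes the product over all permutations. -/
lemma key_rearrangement : ∀ (N : ℕ) (g : Fin N → Fin N → ℝ),
    (∀ i k, 0 < g i k) →
    (∀ i j k l, i ≤ j → k ≤ l → g i k * g j l ≤ g i l * g j k) →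
    ∀ σ : Equiv.Perm (Fin N), ∏ j, g j j ≤ ∏ j, g j (σ j) := by
  intro N
  induction N with
  | zero => intro g _ _ σ; simp
  | succ n ih =>
    intro g hpos H σ
    set L : Fin (n+1) := Fin.last n with hLdef
    set i : Fin (n+1) := σ⁻¹ L with hidef
    set σ' : Equiv.Perm (Fin (n+1)) := σ * Equiv.swap i L with hσ'def
    have hσ'L : σ' L = L := by
      simp [hσ'def, Equiv.Perm.mul_apply, Equiv.swap_apply_right, hidef]
    have hσ'i : σ' i = σ L := by
      simp [hσ'def, Equiv.Perm.mul_apply, Equiv.swap_apply_left]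
    have hσi : σ i = L := by simp [hidef]
    -- Step 1: product over σ' is ≤ product over σ
    have step1 : ∏ j, g j (σ' j) ≤ ∏ j, g j (σ j) := by
      by_cases hiL : i = L
      · have : σ' = σ := by simp [hσ'def, hiL]; rfl
        rw [this]
      · have hLi : L ∈ (Finset.univ.erase i) :=
          Finset.mem_erase.mpr ⟨Ne.symm hiL, Finset.mem_univ L⟩
        have expand : ∀ f : Fin (n+1) → ℝ,
            ∏ j, f j = f i * (f L * ∏ j ∈ (Finset.univ.erase i).erase L, f j) := by
          intro f
          rw [Finset.mul_prod_erase _ f hLi, Finset.mul_prod_erase _ f (Finset.mem_univ i)]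
        have hrest : ∀ j ∈ (Finset.univ.erase i).erase L, g j (σ' j) = g j (σ j) := by
          intro j hj
          simp only [Finset.mem_erase] at hj
          have : Equiv.swap i L j = j := Equiv.swap_apply_of_ne_of_ne hj.2.1 hj.1
          simp [hσ'def, Equiv.Perm.mul_apply, this]
        have hrest_pos : 0 ≤ ∏ j ∈ (Finset.univ.erase i).erase L, g j (σ' j) :=
          Finset.prod_nonneg fun j _ => (hpos _ _).le
        have pair : g i (σ' i) * g L (σ' L) ≤ g i (σ i) * g L (σ L) := by
          rw [hσ'i, hσ'L, hσi]
          exact H i L (σ L) L (Fin.le_last i) (Fin.le_last (σ L))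
        rw [expand (fun j => g j (σ' j)), expand (fun j => g j (σ j)),
          Finset.prod_congr rfl hrest]
        calc g i (σ' i) * (g L (σ' L) * ∏ j ∈ (Finset.univ.erase i).erase L, g j (σ j))
            = (g i (σ' i) * g L (σ' L)) * ∏ j ∈ (Finset.univ.erase i).erase L, g j (σ j) := by ring
          _ ≤ (g i (σ i) * g L (σ L)) * ∏ j ∈ (Finset.univ.erase i).erase L, g j (σ j) := by
              apply mul_le_mul_of_nonneg_right pair
              exact Finset.prod_nonneg fun j _ => (hpos _ _).le
          _ = g i (σ i) * (g L (σ L) * ∏ j ∈ (Finset.univ.erase i).erase L, g j (σ j)) := by ring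
    -- Step 2: σ' fixes L; restrict to Fin n
    have hσ'invL : σ'⁻¹ L = L := by
      conv_lhs => rw [← hσ'L]
      exact σ'.symm_apply_apply L
    have hne : ∀ j : Fin n, σ' j.castSucc ≠ L := by
      intro j h
      have := σ'.injective (h.trans hσ'L.symm)
      exact (Fin.castSucc_lt_last j).ne this
    have hne' : ∀ j : Fin n, σ'⁻¹ j.castSucc ≠ L := by
      intro j h
      have : j.castSucc = σ' L := by rw [← h]; exact (σ'.apply_symm_apply _).symm
      rw [hσ'L] at this
      exact (Fin.castSucc_lt_last j).ne this
    let ρ : Equiv.Perm (Fin n) :=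
      { toFun := fun j => (σ' j.castSucc).castPred (hne j)
        invFun := fun j => (σ'⁻¹ j.castSucc).castPred (hne' j)
        left_inv := by
          intro j
          simp [Fin.castSucc_castPred]
        right_inv := by
          intro j
          simp [Fin.castSucc_castPred] }
    have hrw : ∀ j : Fin n, σ' j.castSucc = (ρ j).castSucc := by
      intro j
      exact (Fin.castSucc_castPred (σ' j.castSucc) (hne j)).symm
    have ihap : ∏ j : Fin n, g j.castSucc j.castSucc
        ≤ ∏ j : Fin n, g j.castSucc ((ρ j).castSucc) := by
      exact ih (fun p q => g p.castSucc q.castSucc)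
        (fun p q => hpos _ _)
        (fun p q r s hpq hrs => H _ _ _ _ (Fin.castSucc_le_castSucc_iff.mpr hpq)
          (Fin.castSucc_le_castSucc_iff.mpr hrs)) ρ
    calc ∏ j, g j j
        = (∏ j : Fin n, g j.castSucc j.castSucc) * g L L := by
          rw [Fin.prod_univ_castSucc]
      _ ≤ (∏ j : Fin n, g j.castSucc ((ρ j).castSucc)) * g L L :=
          mul_le_mul_of_nonneg_right ihap (hpos L L).le
      _ = ∏ j, g j (σ' j) := by
          rw [Fin.prod_univ_castSucc (f := fun j => g j (σ' j)), hσ'L]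
          exact congrArg (· * g L L) (Finset.prod_congr rfl fun j _ => by rw [hrw j])
      _ ≤ ∏ j, g j (σ j) := step1

theorem rearrangement_product_of_sums
    (N : ℕ) (a b : Fin N → ℝ)
    (ha_pos : ∀ j, 0 < a j) (hb_pos : ∀ j, 0 < b j)
    (ha_mono : Monotone a) (hb_mono : Monotone b)
    (σ : Equiv.Perm (Fin N)) :
    (∏ j, (a j + b j)) ≤ (∏ j, (a j + b (σ j))) ∧
      (∏ j, (a j + b (σ j))) ≤ ∏ j, (a j + b j.rev) := by
  constructor
  · exact key_rearrangement N (fun p q => a p + b q)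
      (fun p q => add_pos (ha_pos p) (hb_pos q))
      (fun p q r s hpq hrs => by
        have h1 := ha_mono hpq
        have h2 := hb_mono hrs
        show (a p + b r) * (a q + b s) ≤ (a p + b s) * (a q + b r)
        nlinarith [mul_nonneg (sub_nonneg.mpr h1) (sub_nonneg.mpr h2)]) σ
  · have hkey := key_rearrangement N (fun p q => (a p + b q.rev)⁻¹)
      (fun p q => inv_pos.mpr (add_pos (ha_pos p) (hb_pos q.rev)))
      (fun p q r s hpq hrs => by
        have h1 := ha_mono hpq
        have h2 := hb_mono (Fin.rev_le_rev.mpr hrs)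
        show (a p + b r.rev)⁻¹ * (a q + b s.rev)⁻¹ ≤ (a p + b s.rev)⁻¹ * (a q + b r.rev)⁻¹
        have P1 : 0 < a p + b r.rev := add_pos (ha_pos p) (hb_pos _)
        have P2 : 0 < a q + b s.rev := add_pos (ha_pos q) (hb_pos _)
        have P3 : 0 < a p + b s.rev := add_pos (ha_pos p) (hb_pos _)
        have P4 : 0 < a q + b r.rev := add_pos (ha_pos q) (hb_pos _)
        rw [← mul_inv, ← mul_inv]
        rw [inv_le_inv₀ (by positivity) (by positivity)]
        nlinarith [mul_nonneg (sub_nonneg.mpr h1) (sub_nonneg.mpr h2)])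
      (σ.trans (Fin.revPerm))
    simp only [Equiv.trans_apply, Fin.revPerm_apply, Fin.rev_rev] at hkey
    have hpos1 : ∀ j : Fin N, 0 < a j + b j.rev := fun j => add_pos (ha_pos j) (hb_pos _)
    have hpos2 : ∀ j : Fin N, 0 < a j + b (σ j) := fun j => add_pos (ha_pos j) (hb_pos _)
    have hA : (0:ℝ) < ∏ j, (a j + b (σ j)) := Finset.prod_pos fun j _ => hpos2 j
    have hB : (0:ℝ) < ∏ j, (a j + b j.rev) := Finset.prod_pos fun j _ => hpos1 j
    have hkey' : (∏ j, (a j + b j.rev))⁻¹ ≤ (∏ j, (a j + b (σ j)))⁻¹ := by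
      rw [← Finset.prod_inv_distrib, ← Finset.prod_inv_distrib]
      exact hkey
    exact (inv_le_inv₀ hB hA).mp hkey'
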